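/- Let p be a prime, R a commutative ring of characteristic p, M an R-module, and C : M → M an additive map satisfying C(r^p • m) = r • C(m) for all r ∈ R and m ∈ M. For an element m ∈ M the following are equivalent: (i) there exists an R-submodule N of M with m ∈ N, C(N) ⊆ N, and C^n(N) = 0 for some natural number n (i.e., m lies in a nilpotent Cartier submodule of M); (ii) there exists a natural number e such that C^e(r • m) = 0 for all r ∈ R. -/

import Mathlib

/-- An element `m` of a Cartier module `(M, C)` lies in a nilpotent Cartier submodule if and
only if some iterate `C^e` kills all the `r • m` for `r ∈ R`. -/
theorem mem_nilpotent_cartier_submodule_iff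
    {p : ℕ} (hp : p.Prime) {R : Type*} [CommRing R] [CharP R p]
    {M : Type*} [AddCommGroup M] [Module R M]
    (C : M → M) (hadd : ∀ x y : M, C (x + y) = C x + C y)
    (hC : ∀ (r : R) (m : M), C (r ^ p • m) = r • C m)
    (m : M) :
    (∃ N : Submodule R M, m ∈ N ∧ (∀ x ∈ N, C x ∈ N) ∧ ∃ n : ℕ, ∀ x ∈ N, C^[n] x = 0) ↔
      (∃ e : ℕ, ∀ r : R, C^[e] (r • m) = 0) := by
  have hC0 : C 0 = 0 := by
    have := hadd 0 0
    rw [add_zero] at this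
    exact left_eq_add.mp this
  have hiter0 : ∀ n : ℕ, C^[n] 0 = 0 := fun n => Function.iterate_fixed hC0 n
  have hiteradd : ∀ (n : ℕ) (x y : M), C^[n] (x + y) = C^[n] x + C^[n] y := by
    intro n
    induction n with
    | zero => intro x y; simp
    | succ k ih =>
      intro x y
      rw [Function.iterate_succ_apply', Function.iterate_succ_apply',
        Function.iterate_succ_apply', ih, hadd]
  have hsmul : ∀ (k : ℕ) (s r : R), s • C^[k] (r • m) = C^[k] ((s ^ p ^ k * r) • m) := by
    intro k
    induction k with
    | zero => intro s r; simp [mul_smul]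
    | succ k ih =>
      intro s r
      rw [Function.iterate_succ_apply', ← hC, ih]
      have h1 : (s ^ p) ^ p ^ k * r = s ^ p ^ (k + 1) * r := by
        rw [← pow_mul, ← pow_succ']
      rw [h1, ← Function.iterate_succ_apply' C k]
  constructor
  · rintro ⟨N, hm, -, n, hn⟩
    exact ⟨n, fun r => hn _ (N.smul_mem r hm)⟩
  · rintro ⟨e, he⟩
    set S : Set M := {x | ∃ k : ℕ, ∃ r : R, x = C^[k] (r • m)} with hS
    have hSsmul : ∀ (s : R) (x : M), x ∈ S → s • x ∈ S := by
      rintro s x ⟨k, r, rfl⟩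
      exact ⟨k, s ^ p ^ k * r, hsmul k s r⟩
    let N : Submodule R M :=
      { carrier := AddSubmonoid.closure S
        add_mem' := fun ha hb => AddSubmonoid.add_mem _ ha hb
        zero_mem' := AddSubmonoid.zero_mem _
        smul_mem' := by
          intro s x hx
          induction hx using AddSubmonoid.closure_induction with
          | mem y hy => exact AddSubmonoid.subset_closure (hSsmul s y hy)
          | zero => simpa using AddSubmonoid.zero_mem _
          | add a b ha hb iha ihb =>
            rw [smul_add]
            exact AddSubmonoid.add_mem _ iha ihb }
    have hmem : ∀ x ∈ S, x ∈ N := fun x hx => AddSubmonoid.subset_closure hx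
    refine ⟨N, hmem m ⟨0, 1, by simp⟩, ?_, e, ?_⟩
    · intro x hx
      induction hx using AddSubmonoid.closure_induction with
      | mem y hy =>
        obtain ⟨k, r, rfl⟩ := hy
        exact hmem _ ⟨k + 1, r, (Function.iterate_succ_apply' C k _).symm⟩
      | zero => simpa [hC0] using AddSubmonoid.zero_mem (N.toAddSubmonoid)
      | add a b ha hb iha ihb =>
        rw [hadd]
        exact N.add_mem iha ihb
    · intro x hx
      induction hx using AddSubmonoid.closure_induction with
      | mem y hy =>
        obtain ⟨k, r, rfl⟩ := hy
        rw [← Function.iterate_add_apply, Nat.add_comm, Function.iterate_add_apply,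
          he r, hiter0]
      | zero => simpa using hiter0 e
      | add a b ha hb iha ihb => rw [hiteradd, iha, ihb, add_zero]
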